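/- For every real ε with 0 < ε < 1/2 there exists a constant C such that for all natural numbers p, q, r with n = p + q + r, if p ≥ log₂ n + C and r ≥ log₂ n + C, then there exists a predicate T : B^p × B^q × B^r → Bool such that every predicate T' : B^p × B^q × B^r → Bool of decomposition complexity at most n − C differs from T on more than ε·2^n of the 2^n input triples. -/

import Mathlib

abbrev BS (k : ℕ) := Fin k → Bool

def DecompBound {p q r : ℕ} {M : Type*} (T : BS p → BS q → BS r → M) (n : ℕ) : Prop :=
  ∃ u v : ℕ, u + v ≤ n ∧
    ∃ (a : BS p → BS q → BS u) (b : BS q → BS r → BS v) (t : BS u → BS v → M),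
      ∀ x y z, T x y z = t (a x y) (b y z)

open Real in
lemma exists_lam (ε : ℝ) (hε0 : 0 < ε) (hε : ε < 1/2) :
    ∃ l : ℝ, 0 < l ∧ l < 1 ∧ Real.log (1+l) - ε * Real.log l < Real.log 2 := by
  have h1ε : (0:ℝ) < 1 - ε := by linarith
  set a : ℝ := (ε/(1-ε) + 1)/2 with ha
  have hfrac0 : 0 ≤ ε/(1-ε) := by positivity
  have hfrac1 : ε/(1-ε) < 1 := by
    rw [div_lt_one h1ε]; linarith
  have ha0 : 0 < a := by rw [ha]; positivity
  have ha1 : a < 1 := by rw [ha]; linarith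
  have hafrac : ε/(1-ε) < a := by rw [ha]; linarith
  set l : ℝ := (a+1)/2 with hl
  have hal : a < l := by rw [hl]; linarith
  have hl0 : 0 < l := lt_trans ha0 hal
  have hl1 : l < 1 := by rw [hl]; linarith
  refine ⟨l, hl0, hl1, ?_⟩
  set f : ℝ → ℝ := fun x => Real.log (1+x) - ε * Real.log x with hf
  have key : StrictMonoOn f (Set.Icc a 1) := by
    apply strictMonoOn_of_deriv_pos (convex_Icc a 1)
    · apply ContinuousOn.sub
      · exact (continuousOn_const.add continuousOn_id).log
          (fun x hx => by have := hx.1; exact ne_of_gt (show (0:ℝ) < 1 + x by linarith))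
      · exact continuousOn_const.mul
          (Real.continuousOn_log.mono (fun x hx => by
            simp only [Set.mem_compl_iff, Set.mem_singleton_iff]
            have := hx.1; intro h; rw [h] at this; linarith))
    · intro x hx
      rw [interior_Icc] at hx
      obtain ⟨hxa, hx1⟩ := hx
      have hx0 : 0 < x := lt_trans ha0 hxa
      have h1x : 0 < 1 + x := by linarith
      have hd : HasDerivAt f (1/(1+x) - ε * (1/x)) x := by
        have h1 : HasDerivAt (fun x : ℝ => 1 + x) 1 x := by
          simpa using (hasDerivAt_id x).const_add 1
        have h2 : HasDerivAt (fun x : ℝ => Real.log (1+x)) (1/(1+x)) x := by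
          simpa using h1.log h1x.ne'
        have h3 : HasDerivAt (fun x : ℝ => ε * Real.log x) (ε * (1/x)) x := by
          simpa using (Real.hasDerivAt_log hx0.ne').const_mul ε
        exact h2.sub h3
      rw [hd.deriv]
      have hxe : ε * (1+x) < x := by
        have : ε/(1-ε) < x := lt_trans hafrac hxa
        rw [div_lt_iff₀ h1ε] at this
        nlinarith
      rw [sub_pos, mul_one_div, div_lt_div_iff₀ hx0 h1x]
      nlinarith
  have h := key (Set.mem_Icc.mpr ⟨hal.le, hl1.le⟩) (Set.mem_Icc.mpr ⟨ha1.le, le_refl 1⟩) hl1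
  norm_num [hf] at h; exact h


lemma card_BS3 (p q r : ℕ) : Fintype.card (BS p × BS q × BS r) = 2^(p+q+r) := by
  simp [Fintype.card_fun, pow_add, mul_assoc]

lemma card_G (p q r : ℕ) :
    Fintype.card (BS p → BS q → BS r → Bool) = 2^(2^(p+q+r)) := by
  have h : (2:ℕ)^(p+q+r) = 2^p*2^q*2^r := by rw [pow_add, pow_add]
  simp [Fintype.card_fun, ← pow_mul, h]
  ring_nf

lemma ball_card_le (p q r : ℕ) (T' : BS p → BS q → BS r → Bool) (m : ℕ) :
    (Finset.univ.filter fun T : BS p → BS q → BS r → Bool =>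
      (Finset.univ.filter fun w : BS p × BS q × BS r =>
        T w.1 w.2.1 w.2.2 ≠ T' w.1 w.2.1 w.2.2).card ≤ m).card
    ≤ ∑ k ∈ Finset.range (m+1), (2^(p+q+r)).choose k := by
  classical
  set φ : (BS p → BS q → BS r → Bool) → Finset (BS p × BS q × BS r) :=
    fun T => Finset.univ.filter fun w => T w.1 w.2.1 w.2.2 ≠ T' w.1 w.2.1 w.2.2 with hφ
  have step1 : (Finset.univ.filter fun T : BS p → BS q → BS r → Bool =>
      (φ T).card ≤ m).card ≤
      ((Finset.univ : Finset (Finset (BS p × BS q × BS r))).filter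
        fun S => S.card ≤ m).card := by
    apply Finset.card_le_card_of_injOn φ
    · intro T hT
      simp only [Finset.coe_filter, Finset.mem_coe, Finset.mem_filter, Finset.mem_univ, true_and, Set.mem_setOf_eq] at hT ⊢
      exact hT
    · intro T₁ _ T₂ _ h
      funext x y z
      have hw : ((x,y,z) ∈ φ T₁) ↔ ((x,y,z) ∈ φ T₂) := by rw [h]
      simp only [hφ, Finset.mem_filter, Finset.mem_univ, true_and] at hw
      cases hT' : T' x y z <;> cases hT₁ : T₁ x y z <;> cases hT₂ : T₂ x y z <;>
        simp_all
  refine step1.trans ?_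
  have step2 : ((Finset.univ : Finset (Finset (BS p × BS q × BS r))).filter
      fun S => S.card ≤ m) ⊆
      (Finset.range (m+1)).biUnion
        (fun k => Finset.powersetCard k (Finset.univ : Finset (BS p × BS q × BS r))) := by
    intro S hS
    simp only [Finset.mem_filter, Finset.mem_univ, true_and] at hS
    rw [Finset.mem_biUnion]
    exact ⟨S.card, Finset.mem_range.mpr (Nat.lt_succ_of_le hS),
      Finset.mem_powersetCard.mpr ⟨Finset.subset_univ S, rfl⟩⟩
  calc _ ≤ _ := Finset.card_le_card step2
    _ ≤ ∑ k ∈ Finset.range (m+1), (Finset.powersetCard k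
          (Finset.univ : Finset (BS p × BS q × BS r))).card := Finset.card_biUnion_le
    _ = _ := by
      apply Finset.sum_congr rfl
      intro k _
      rw [Finset.card_powersetCard, Finset.card_univ, card_BS3]


lemma sum_choose_le (N m : ℕ) (hm : m ≤ N) (l : ℝ) (hl0 : 0 < l) (hl1 : l ≤ 1) :
    ((∑ k ∈ Finset.range (m+1), N.choose k : ℕ) : ℝ) ≤ l⁻¹^m * (1+l)^N := by
  have key : ((∑ k ∈ Finset.range (m+1), N.choose k : ℕ) : ℝ) * l^m ≤ (1+l)^N := by
    push_cast
    calc (∑ k ∈ Finset.range (m+1), (N.choose k : ℝ)) * l^m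
        = ∑ k ∈ Finset.range (m+1), (N.choose k : ℝ) * l^m := by
          rw [Finset.sum_mul]
      _ ≤ ∑ k ∈ Finset.range (m+1), (N.choose k : ℝ) * l^k := by
          apply Finset.sum_le_sum
          intro k hk
          have hk' : k ≤ m := Nat.lt_succ_iff.mp (Finset.mem_range.mp hk)
          exact mul_le_mul_of_nonneg_left
            (pow_le_pow_of_le_one hl0.le hl1 hk') (by positivity)
      _ ≤ ∑ k ∈ Finset.range (N+1), (N.choose k : ℝ) * l^k := by
          apply Finset.sum_le_sum_of_subset_of_nonneg
          · exact Finset.range_subset_range.mpr (by omega)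
          · intro k _ _; positivity
      _ = (1+l)^N := by
          rw [add_comm (1:ℝ) l, add_pow]
          apply Finset.sum_congr rfl
          intro k _
          simp [mul_comm]
  have hlm : (0:ℝ) < l^m := by positivity
  rw [inv_pow, ← div_eq_inv_mul, le_div_iff₀ hlm]
  exact key


lemma decomp_card_le (p q r m : ℕ)
    [DecidablePred fun T' : BS p → BS q → BS r → Bool => DecompBound T' m] :
    (Finset.univ.filter fun T' : BS p → BS q → BS r → Bool => DecompBound T' m).card
      ≤ (m+1)^2 * 2^(m * 2^(p+q) + m * 2^(q+r) + 2^m) := by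
  classical
  set E := m * 2^(p+q) + m * 2^(q+r) + 2^m with hE
  set D := (Finset.range (m+1)) ×ˢ (Finset.range (m+1)) with hD
  set F : ℕ × ℕ → Finset (BS p → BS q → BS r → Bool) := fun uv =>
    if uv.1 + uv.2 ≤ m then
      Finset.image (fun abt : ((BS p → BS q → BS uv.1) × (BS q → BS r → BS uv.2) ×
        (BS uv.1 → BS uv.2 → Bool)) => fun x y z => abt.2.2 (abt.1 x y) (abt.2.1 y z))
        Finset.univ
    else ∅ with hF
  have hsub : (Finset.univ.filter fun T' : BS p → BS q → BS r → Bool =>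
      DecompBound T' m) ⊆ D.biUnion F := by
    intro T' hT'
    simp only [Finset.mem_filter, Finset.mem_univ, true_and] at hT'
    obtain ⟨u, v, huv, a, b, t, heq⟩ := hT'
    rw [Finset.mem_biUnion]
    refine ⟨(u, v), ?_, ?_⟩
    · rw [hD, Finset.mem_product]
      constructor <;> simp <;> omega
    · rw [hF]
      simp only [if_pos huv]
      rw [Finset.mem_image]
      refine ⟨(a, b, t), Finset.mem_univ _, ?_⟩
      funext x y z
      exact (heq x y z).symm
  have hcard : ∀ uv ∈ D, (F uv).card ≤ 2^E := by
    rintro ⟨u, v⟩ hD'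
    rw [hF]
    by_cases h : u + v ≤ m
    · simp only [if_pos h]
      refine (Finset.card_image_le.trans ?_)
      rw [Finset.card_univ]
      have hc : Fintype.card ((BS p → BS q → BS u) × (BS q → BS r → BS v) ×
          (BS u → BS v → Bool)) = 2^(u * (2^q * 2^p)) * (2^(v * (2^r * 2^q)) * 2^(2^v * 2^u)) := by
        simp [Fintype.card_fun, ← pow_mul, mul_assoc]
      rw [hc]
      have hu : u ≤ m := by omega
      have hv : v ≤ m := by omega
      have h1 : u * (2^q * 2^p) ≤ m * 2^(p+q) := by
        rw [pow_add]; exact Nat.mul_le_mul hu (le_of_eq (mul_comm _ _))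
      have h2 : v * (2^r * 2^q) ≤ m * 2^(q+r) := by
        rw [pow_add]; exact Nat.mul_le_mul hv (le_of_eq (mul_comm _ _))
      have h3 : 2^v * 2^u ≤ 2^m := by
        rw [← pow_add]; exact Nat.pow_le_pow_right (by norm_num) (by omega)
      calc 2^(u*(2^q*2^p)) * (2^(v*(2^r*2^q)) * 2^(2^v*2^u))
          ≤ 2^(m*2^(p+q)) * (2^(m*2^(q+r)) * 2^(2^m)) := by
            exact Nat.mul_le_mul (Nat.pow_le_pow_right (by norm_num) h1)
              (Nat.mul_le_mul (Nat.pow_le_pow_right (by norm_num) h2) (Nat.pow_le_pow_right (by norm_num) h3))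
        _ = 2^E := by simp [hE, pow_add, mul_assoc]
    · simp [if_neg h]
  calc (Finset.univ.filter fun T' : BS p → BS q → BS r → Bool => DecompBound T' m).card
      ≤ (D.biUnion F).card := Finset.card_le_card hsub
    _ ≤ ∑ uv ∈ D, (F uv).card := Finset.card_biUnion_le
    _ ≤ ∑ _uv ∈ D, 2^E := Finset.sum_le_sum hcard
    _ = (m+1)^2 * 2^E := by
        rw [Finset.sum_const, hD, Finset.card_product, Finset.card_range, smul_eq_mul, sq]


lemma analytic_key (ε l d : ℝ) (hl0 : 0 < l) (hl1 : l < 1) (hε0 : 0 < ε) (hε : ε < 1/2)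
    (hd : d = Real.log 2 - (Real.log (1+l) - ε * Real.log l)) (hd0 : 0 < d)
    (k₁ j n C : ℕ) (hk₁ : 2*Real.log 2/d < (2:ℝ)^k₁) (hj : 8/d < (2:ℝ)^j)
    (hCk : k₁ + 3 ≤ C) (hCj : 2*j+3 ≤ C) (hCn : C ≤ n)
    (m₀ : ℕ) (hm₀le : (m₀:ℝ) ≤ ε * 2^n) :
    ((n+1:ℕ):ℝ)^2 * (2:ℝ)^(2^(n+3-C)) * (l⁻¹^m₀ * (1+l)^(2^n)) < (2:ℝ)^(2^n) := by
  have hNR : ((2^n:ℕ):ℝ) = (2:ℝ)^n := by push_cast; ring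
  have hl0' : (0:ℝ) < l⁻¹ := by positivity
  have h1l : (0:ℝ) < 1 + l := by linarith
  have hlinv1 : (1:ℝ) ≤ l⁻¹ := by
    rw [le_inv_comm₀ one_pos hl0]
    simpa using hl1.le
  set X : ℝ := ((n+1:ℕ):ℝ)^2 * (2:ℝ)^(2^(n+3-C)) * (l⁻¹^m₀ * (1+l)^(2^n)) with hX
  have hX0 : (0:ℝ) < X := by rw [hX]; positivity
  suffices hls : Real.log X < Real.log ((2:ℝ)^(2^n)) by
    calc X = Real.exp (Real.log X) := (Real.exp_log hX0).symm
      _ < Real.exp (Real.log ((2:ℝ)^(2^n))) := Real.exp_lt_exp.mpr hls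
      _ = (2:ℝ)^(2^n) := Real.exp_log (by positivity)
  have hXlog : Real.log X = 2*Real.log ((n+1:ℕ):ℝ)
      + ((2^(n+3-C):ℕ):ℝ)*Real.log 2
      + ((m₀:ℝ) * Real.log l⁻¹ + (2:ℝ)^n * Real.log (1+l)) := by
    rw [hX, Real.log_mul (by positivity) (by positivity),
      Real.log_mul (by positivity) (by positivity),
      Real.log_mul (by positivity) (by positivity),
      Real.log_pow, Real.log_pow, Real.log_pow, Real.log_pow, ← hNR]
    push_cast
    ring
  have hb1 : (m₀:ℝ) * Real.log l⁻¹ ≤ (ε * (2:ℝ)^n) * Real.log l⁻¹ :=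
    mul_le_mul_of_nonneg_right hm₀le (Real.log_nonneg hlinv1)
  have hb2 : ((2^(n+3-C):ℕ):ℝ) * Real.log 2 ≤ (2:ℝ)^n * (d/2) := by
    have hcast : ((2^(n+3-C):ℕ):ℝ) * (2:ℝ)^(C-3) = (2:ℝ)^n := by
      push_cast
      rw [← pow_add]
      congr 1
      omega
    have hpC : (0:ℝ) < (2:ℝ)^(C-3) := by positivity
    have hpowk : (2:ℝ)^k₁ ≤ (2:ℝ)^(C-3) :=
      pow_le_pow_right₀ one_le_two (by omega)
    have h2d : 2*Real.log 2 < d * (2:ℝ)^(C-3) := by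
      rw [div_lt_iff₀ hd0] at hk₁
      have h' := mul_le_mul_of_nonneg_right hpowk hd0.le
      calc 2*Real.log 2 < (2:ℝ)^k₁ * d := hk₁
        _ ≤ (2:ℝ)^(C-3) * d := h'
        _ = d * (2:ℝ)^(C-3) := mul_comm _ _
    have heq : ((2^(n+3-C):ℕ):ℝ) = (2:ℝ)^n / (2:ℝ)^(C-3) := by
      rw [eq_div_iff hpC.ne']
      exact hcast
    rw [heq, div_mul_eq_mul_div, div_le_iff₀ hpC]
    have hpn' : (0:ℝ) ≤ (2:ℝ)^n := by positivity
    nlinarith [mul_le_mul_of_nonneg_left h2d.le hpn']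
  have hb3 : 2*Real.log ((n+1:ℕ):ℝ) < (2:ℝ)^n * (d/2) := by
    have hlogn : Real.log ((n+1:ℕ):ℝ) ≤ (n:ℝ) := by
      have h := Real.log_le_sub_one_of_pos (x := ((n+1:ℕ):ℝ)) (by positivity)
      push_cast at h ⊢
      linarith
    have hjn : j ≤ n := by omega
    have hsplit : (2:ℝ)^n = (2:ℝ)^j * (2:ℝ)^(n-j) := by
      rw [← pow_add]; congr 1; omega
    have h8 : (8:ℝ) < d * (2:ℝ)^j := by
      rw [div_lt_iff₀ hd0] at hj; linarith
    have hpow : ((n-j:ℕ):ℝ) + 1 ≤ (2:ℝ)^(n-j) := by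
      exact_mod_cast Nat.lt_two_pow_self (n := n-j)
    have hcast2 : ((n-j:ℕ):ℝ) = (n:ℝ) - (j:ℝ) := by
      push_cast [Nat.cast_sub hjn]; ring
    have h2j : 2*(j:ℝ) + 3 ≤ (n:ℝ) := by exact_mod_cast hCj.trans hCn
    have hnj0 : (0:ℝ) < (2:ℝ)^(n-j) := by positivity
    have h4n : 4*(n:ℝ) < d * (2:ℝ)^n := by
      rw [hsplit, ← mul_assoc]
      nlinarith
    linarith
  have hRHS : Real.log ((2:ℝ)^(2^n)) = (2:ℝ)^n * Real.log 2 := by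
    rw [Real.log_pow, hNR]
  rw [hXlog, hRHS]
  have hfin : (2:ℝ)^n * (d/2) + (2:ℝ)^n * (d/2)
      + ((ε * (2:ℝ)^n) * Real.log l⁻¹ + (2:ℝ)^n * Real.log (1+l))
      = (2:ℝ)^n * Real.log 2 := by
    rw [Real.log_inv, hd]
    ring
  linarith

theorem exists_predicate_hard_to_approximate (ε : ℝ) (hε0 : 0 < ε) (hε : ε < 1 / 2) :
    ∃ C : ℕ, ∀ p q r : ℕ,
      Nat.log 2 (p + q + r) + C ≤ p → Nat.log 2 (p + q + r) + C ≤ r →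
      ∃ T : BS p → BS q → BS r → Bool,
        ∀ T' : BS p → BS q → BS r → Bool, DecompBound T' (p + q + r - C) →
          ε * 2 ^ (p + q + r) <
            ((Finset.univ.filter (fun w : BS p × BS q × BS r =>
                T w.1 w.2.1 w.2.2 ≠ T' w.1 w.2.1 w.2.2)).card : ℝ) := by
  classical
  obtain ⟨l, hl0, hl1, hlog⟩ := exists_lam ε hε0 (by linarith)
  set d : ℝ := Real.log 2 - (Real.log (1+l) - ε * Real.log l) with hd
  have hd0 : 0 < d := by rw [hd]; linarith
  obtain ⟨k₁, hk₁⟩ := pow_unbounded_of_one_lt (R := ℝ) (2*Real.log 2/d) one_lt_two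
  obtain ⟨j, hj⟩ := pow_unbounded_of_one_lt (R := ℝ) (8/d) one_lt_two
  refine ⟨max (k₁+3) (2*j+3), ?_⟩
  intro p q r hp hr
  set C := max (k₁+3) (2*j+3) with hC
  have hC3 : 3 ≤ C := le_trans (by omega) (le_max_left _ _)
  have hCk : k₁ + 3 ≤ C := le_max_left _ _
  have hCj : 2*j + 3 ≤ C := le_max_right _ _
  set n := p + q + r with hn
  have hpn : p ≤ n := by omega
  have hrn : r ≤ n := by omega
  have hCp : C ≤ p := le_trans (Nat.le_add_left C _) hp
  have hCn : C ≤ n := hCp.trans hpn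
  have hn1 : 1 ≤ n := by omega
  set m := n - C with hm
  set m₀ := ⌊ε * (2:ℝ)^n⌋₊ with hm₀
  set N := 2^n with hN
  -- m₀ ≤ ε 2^n and m₀ ≤ N
  have hNR : ((N:ℕ):ℝ) = (2:ℝ)^n := by push_cast [hN]; ring
  have hm₀le : (m₀ : ℝ) ≤ ε * (2:ℝ)^n := Nat.floor_le (by positivity)
  have hm₀N : m₀ ≤ N := by
    have h1 : (m₀:ℝ) ≤ ((N:ℕ):ℝ) := by
      rw [hNR]
      calc (m₀:ℝ) ≤ ε * 2^n := hm₀le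
        _ ≤ 1 * 2^n := by
            apply mul_le_mul_of_nonneg_right (by linarith) (by positivity)
        _ = 2^n := one_mul _
    exact_mod_cast h1
  -- the exponent bound
  have hE : m * 2^(p+q) + m * 2^(q+r) + 2^m ≤ 2^(n+3-C) := by
    have hnlog : n < 2^(Nat.log 2 n + 1) := Nat.lt_pow_succ_log_self (by norm_num) n
    have hpq : p + q = n - r := by omega
    have hqr : q + r = n - p := by omega
    have t1 : m * 2^(p+q) ≤ 2^(n+1-C) := by
      calc m * 2^(p+q) ≤ 2^(Nat.log 2 n + 1) * 2^(n-r) := by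
            rw [hpq]; exact Nat.mul_le_mul (by omega) le_rfl
        _ = 2^(Nat.log 2 n + 1 + (n-r)) := by rw [← pow_add]
        _ ≤ 2^(n+1-C) := Nat.pow_le_pow_right (by norm_num) (by omega)
    have t2 : m * 2^(q+r) ≤ 2^(n+1-C) := by
      calc m * 2^(q+r) ≤ 2^(Nat.log 2 n + 1) * 2^(n-p) := by
            rw [hqr]; exact Nat.mul_le_mul (by omega) le_rfl
        _ = 2^(Nat.log 2 n + 1 + (n-p)) := by rw [← pow_add]
        _ ≤ 2^(n+1-C) := Nat.pow_le_pow_right (by norm_num) (by omega)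
    have e1 : n+1-C = m+1 := by omega
    have e3 : n+3-C = m+3 := by omega
    rw [e1] at t1 t2
    rw [e3]
    have hx : 2^(m+1) + 2^(m+1) + 2^m ≤ 2^(m+3) := by
      have : (0:ℕ) < 2^m := Nat.pow_pos (n := m) (by norm_num)
      simp only [pow_succ]
      nlinarith
    omega
  -- main counting objects
  set G := (BS p → BS q → BS r → Bool)
  set Bad : Finset G := Finset.univ.filter (fun T' : G => DecompBound T' m) with hBad
  set Ball : G → Finset G := fun T' => Finset.univ.filter fun T : G =>
    (Finset.univ.filter fun w : BS p × BS q × BS r =>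
      T w.1 w.2.1 w.2.2 ≠ T' w.1 w.2.1 w.2.2).card ≤ m₀ with hBall
  set U : Finset G := Bad.biUnion Ball with hU
  set S := ∑ k ∈ Finset.range (m₀+1), N.choose k with hS
  set A := (m+1)^2 * 2^(m * 2^(p+q) + m * 2^(q+r) + 2^m) with hA
  have hUle : U.card ≤ A * S := by
    calc U.card ≤ ∑ T' ∈ Bad, (Ball T').card := Finset.card_biUnion_le
      _ ≤ ∑ _T' ∈ Bad, S := Finset.sum_le_sum (fun T' _ => ball_card_le p q r T' m₀)
      _ = Bad.card * S := by rw [Finset.sum_const, smul_eq_mul]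
      _ ≤ A * S := Nat.mul_le_mul_right S (decomp_card_le p q r m)
  -- the real-valued bound
  have key : (A:ℝ) * S < (2:ℝ)^N := by
    have hAR : (A:ℝ) ≤ ((n+1:ℕ):ℝ)^2 * (2:ℝ)^(2^(n+3-C)) := by
      have : A ≤ (n+1)^2 * 2^(2^(n+3-C)) := by
        apply Nat.mul_le_mul
        · exact Nat.pow_le_pow_left (by omega) 2
        · exact Nat.pow_le_pow_right (by norm_num) hE
      calc (A:ℝ) ≤ (((n+1)^2 * 2^(2^(n+3-C)) : ℕ) : ℝ) := by exact_mod_cast this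
        _ = ((n+1:ℕ):ℝ)^2 * (2:ℝ)^(2^(n+3-C)) := by push_cast; ring
    have hSR : (S:ℝ) ≤ l⁻¹^m₀ * (1+l)^N := sum_choose_le N m₀ hm₀N l hl0 hl1.le
    have hS0 : (0:ℝ) ≤ (S:ℝ) := Nat.cast_nonneg S
    have step : (A:ℝ) * S ≤ ((n+1:ℕ):ℝ)^2 * (2:ℝ)^(2^(n+3-C)) * (l⁻¹^m₀ * (1+l)^N) := by
      apply mul_le_mul hAR hSR hS0
      positivity
    refine lt_of_le_of_lt step ?_
    rw [hN]
    exact analytic_key ε l d hl0 hl1 hε0 (by linarith) hd hd0 k₁ j n C hk₁ hj hCk hCj hCn m₀ hm₀le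
  have hcard : U.card < Fintype.card G := by
    have h1 : (U.card : ℝ) ≤ (A:ℝ) * S := by exact_mod_cast hUle
    have h2 : (U.card : ℝ) < (2:ℝ)^N := lt_of_le_of_lt h1 key
    have h3 : ((Fintype.card G : ℕ):ℝ) = (2:ℝ)^N := by
      rw [card_G p q r]; push_cast [hN]; ring
    rw [← h3] at h2
    exact_mod_cast h2
  obtain ⟨T, hT⟩ : ∃ T : G, T ∉ U := by
    by_contra hcon
    push_neg at hcon
    have : (Finset.univ : Finset G) ⊆ U := fun T _ => hcon T
    have := Finset.card_le_card this
    rw [Finset.card_univ] at this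
    omega
  refine ⟨T, ?_⟩
  intro T' hT'
  have hT'Bad : T' ∈ Bad := by
    rw [hBad, Finset.mem_filter]
    exact ⟨Finset.mem_univ _, hT'⟩
  have hnotball : T ∉ Ball T' := fun hb => hT (Finset.mem_biUnion.mpr ⟨T', hT'Bad, hb⟩)
  rw [hBall, Finset.mem_filter] at hnotball
  push_neg at hnotball
  have hgt := hnotball (Finset.mem_univ T)
  have : (m₀:ℝ) + 1 ≤ ((Finset.univ.filter fun w : BS p × BS q × BS r =>
      T w.1 w.2.1 w.2.2 ≠ T' w.1 w.2.1 w.2.2).card : ℝ) := by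
    exact_mod_cast hgt
  calc ε * 2^(p+q+r) < (m₀:ℝ) + 1 := Nat.lt_floor_add_one _
    _ ≤ _ := this
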